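/- Let H be a non-empty finite set of non-negative integers, let P' be a finite set of primes, and let p be a prime not in P'. Then the natural densities η_{P'}^H := δ(N_{P'}^H), η_p^H := δ(N_{{p}}^H) and η_{P'∪{p}}^H := δ(N_{P'∪{p}}^H) all exist and satisfy η_{P'∪{p}}^H = η_{P'}^H (1 − η_p^H) + η_p^H (1 − η_{P'}^H). -/

import Mathlib

open Filter Topology
open scoped symmDiff Classical

/-- `Ω_P(n)`: number of prime factors of `n` (with multiplicity) lying in `P`. -/
noncomputable def OmegaP (P : Set ℕ) (n : ℕ) : ℕ :=
  n.factorization.sum fun p k => if p ∈ P then k else 0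

/-- `λ_P`, the completely multiplicative function equal to `-1` at primes in `P`
and `1` at all other primes. -/
noncomputable def lambdaP (P : Set ℕ) (n : ℕ) : ℝ :=
  (-1 : ℝ) ^ OmegaP P n

/-- `Λ_P^H(n) = ∏_{h ∈ H} λ_P(n + h)` (empty product is `1`). -/
noncomputable def LambdaPH (P : Set ℕ) (H : Finset ℕ) (n : ℕ) : ℝ :=
  ∏ h ∈ H, lambdaP P (n + h)

/-- `N_P^H = {n : Λ_P^H(n) = -1}`. -/
def NPH (P : Set ℕ) (H : Finset ℕ) : Set ℕ :=
  {n : ℕ | LambdaPH P H n = -1}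

/-- Number of elements of `A` in `[1, x]`. -/
noncomputable def countIn (A : Set ℕ) (x : ℕ) : ℕ :=
  ((Finset.Icc 1 x).filter (fun n => n ∈ A)).card

/-- `A ⊆ ℕ` has natural density `d`: `|A ∩ [1,x]|/x → d`. -/
def HasDensity (A : Set ℕ) (d : ℝ) : Prop :=
  Filter.Tendsto (fun x : ℕ => (countIn A x : ℝ) / x) Filter.atTop (nhds d)

/-- The Cesàro average `(1/x) ∑_{n ≤ x} Λ_P^H(n)`. -/
noncomputable def cesaroAvg (P : Set ℕ) (H : Finset ℕ) (x : ℕ) : ℝ :=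
  (∑ n ∈ Finset.Icc 1 x, LambdaPH P H n) / x

/-- A set of naturals is small if the sum of reciprocals of its elements converges. -/
def SmallSet (P : Set ℕ) : Prop :=
  Summable fun p : P => (1 : ℝ) / (p : ℝ)

/-- `C(r,s) = {n : n ≡ -r (mod s)}`. -/
def Cset (r s : ℕ) : Set ℕ :=
  {n : ℕ | (n : ℤ) ≡ -(r : ℤ) [ZMOD (s : ℤ)]}

/-- The set of `P`-smooth positive integers. -/
def SmoothP (P : Set ℕ) : Set ℕ :=
  {n : ℕ | 0 < n ∧ ∀ p : ℕ, p.Prime → p ∣ n → p ∈ P}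

/-- `𝒜_P`: all finite unions of sets from `{∅} ∪ {C(r,n) : r ∈ ℕ, n ∈ S_P}`. -/
def calA (P : Set ℕ) : Set (Set ℕ) :=
  {A : Set ℕ | ∃ F : Finset (ℕ × ℕ), (∀ q ∈ F, q.2 ∈ SmoothP P) ∧
    A = ⋃ q ∈ F, Cset q.1 q.2}

lemma block_sum (g : ℕ → ℝ) (T : ℕ) (hper : ∀ n, 1 ≤ n → g (n + T) = g n) (a : ℕ) :
    ∑ n ∈ Finset.Ioc a (a + T), g n = ∑ n ∈ Finset.Ioc 0 T, g n := by
  induction a with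
  | zero => simp
  | succ a ih =>
    have h1 : ∑ n ∈ Finset.Ioc a (a+1), g n + ∑ n ∈ Finset.Ioc (a+1) (a+1+T), g n
        = ∑ n ∈ Finset.Ioc a (a+1+T), g n :=
      Finset.sum_Ioc_consecutive _ (by omega) (by omega)
    have h2 : ∑ n ∈ Finset.Ioc a (a+T), g n + ∑ n ∈ Finset.Ioc (a+T) (a+1+T), g n
        = ∑ n ∈ Finset.Ioc a (a+1+T), g n :=
      Finset.sum_Ioc_consecutive _ (by omega) (by omega)
    have e1 : Finset.Ioc a (a+1) = {a+1} := by simp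
    have e2 : Finset.Ioc (a+T) (a+1+T) = {a+T+1} := by
      rw [show a+1+T = (a+T)+1 by ring]; simp
    rw [e1, Finset.sum_singleton] at h1
    rw [e2, Finset.sum_singleton] at h2
    have hg : g (a+T+1) = g (a+1) := by
      rw [show a+T+1 = (a+1)+T by ring]; exact hper (a+1) (by omega)
    rw [← ih]; linarith

lemma multiple_sum (g : ℕ → ℝ) (T : ℕ) (hper : ∀ n, 1 ≤ n → g (n + T) = g n) (k : ℕ) :
    ∑ n ∈ Finset.Ioc 0 (k * T), g n = k * ∑ n ∈ Finset.Ioc 0 T, g n := by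
  induction k with
  | zero => simp
  | succ k ih =>
    have h1 : ∑ n ∈ Finset.Ioc 0 (k*T), g n + ∑ n ∈ Finset.Ioc (k*T) (k*T + T), g n
        = ∑ n ∈ Finset.Ioc 0 (k*T + T), g n :=
      Finset.sum_Ioc_consecutive _ (by omega) (by omega)
    rw [show (k+1)*T = k*T + T by ring, ← h1, ih, block_sum g T hper]
    push_cast; ring

lemma periodic_mean (g : ℕ → ℝ) (C : ℝ) (hC : ∀ n, |g n| ≤ C) (T : ℕ) (hT : 0 < T)
    (hper : ∀ n, 1 ≤ n → g (n + T) = g n) :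
    Tendsto (fun x : ℕ => (∑ n ∈ Finset.Ioc 0 x, g n) / x) atTop
      (nhds ((∑ n ∈ Finset.Ioc 0 T, g n) / T)) := by
  set S := ∑ n ∈ Finset.Ioc 0 T, g n with hS
  have hC0 : 0 ≤ C := le_trans (abs_nonneg _) (hC 0)
  have key : ∀ x : ℕ, 1 ≤ x → |(∑ n ∈ Finset.Ioc 0 x, g n) / x - S / T| ≤ (|S| + C * T) / x := by
    intro x hx
    have hx0 : (0:ℝ) < x := by exact_mod_cast hx
    have hT0 : (0:ℝ) < T := by exact_mod_cast hT
    have hsplit : ∑ n ∈ Finset.Ioc 0 ((x/T)*T), g n + ∑ n ∈ Finset.Ioc ((x/T)*T) x, g n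
        = ∑ n ∈ Finset.Ioc 0 x, g n :=
      Finset.sum_Ioc_consecutive _ (by omega) (Nat.div_mul_le_self x T)
    have hmul := multiple_sum g T hper (x/T)
    have hmodlt : x - (x/T)*T < T := by
      have hma := Nat.mod_add_div' x T
      have hml := Nat.mod_lt x hT
      have := Nat.sub_eq_of_eq_add hma.symm
      rw [this]; exact hml
    have hrem : |∑ n ∈ Finset.Ioc ((x/T)*T) x, g n| ≤ C * T := by
      calc |∑ n ∈ Finset.Ioc ((x/T)*T) x, g n| ≤ ∑ n ∈ Finset.Ioc ((x/T)*T) x, |g n| :=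
            Finset.abs_sum_le_sum_abs _ _
        _ ≤ ∑ _n ∈ Finset.Ioc ((x/T)*T) x, C := Finset.sum_le_sum (fun i _ => hC i)
        _ = ((Finset.Ioc ((x/T)*T) x).card : ℝ) * C := by rw [Finset.sum_const]; ring
        _ ≤ C * T := by
            rw [Nat.card_Ioc]
            have : ((x - (x/T)*T : ℕ) : ℝ) ≤ T := by exact_mod_cast le_of_lt hmodlt
            nlinarith
    have hfloor : |((x/T : ℕ) : ℝ) * T - x| ≤ T := by
      have h1 : ((x/T:ℕ):ℝ) * T ≤ x := by exact_mod_cast Nat.div_mul_le_self x T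
      have h2 : x < (x/T+1)*T := by
        have hma := Nat.mod_add_div' x T
        have hml := Nat.mod_lt x hT
        calc x = x % T + x/T*T := hma.symm
          _ < T + x/T*T := Nat.add_lt_add_right hml _
          _ = (x/T+1)*T := by ring
      have h2' : (x:ℝ) < (((x/T:ℕ):ℝ)+1)*T := by exact_mod_cast h2
      rw [abs_sub_comm, abs_of_nonneg (by linarith)]
      nlinarith
    rw [← hsplit, hmul, ← hS]
    have expand : ((x/T : ℕ):ℝ) * S / x - S / T = S * (((x/T:ℕ):ℝ) * T - x) / (T * x) := by
      field_simp
    calc |(((x/T:ℕ):ℝ) * S + ∑ n ∈ Finset.Ioc ((x/T)*T) x, g n) / x - S / T|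
        = |(((x/T:ℕ):ℝ) * S / x - S / T) + (∑ n ∈ Finset.Ioc ((x/T)*T) x, g n) / x| := by
          rw [add_div]; ring_nf
      _ ≤ |((x/T:ℕ):ℝ) * S / x - S / T| + |(∑ n ∈ Finset.Ioc ((x/T)*T) x, g n) / x| :=
          abs_add_le _ _
      _ ≤ |S| / x + (C * T) / x := by
          gcongr ?_ + ?_
          · rw [expand, abs_div, abs_mul]
            rw [abs_of_pos (by positivity : (0:ℝ) < T * x)]
            calc |S| * |((x/T:ℕ):ℝ) * T - x| / (T * x) ≤ |S| * T / (T * x) := by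
                  gcongr
              _ = |S| / x := by field_simp
          · rw [abs_div, abs_of_pos hx0]
            gcongr
      _ = (|S| + C*T)/x := by ring
  rw [Metric.tendsto_atTop]
  intro ε hε
  obtain ⟨N, hN⟩ := exists_nat_gt ((|S| + C*T)/ε)
  refine ⟨N + 1, fun x hx => ?_⟩
  have hx1 : 1 ≤ x := by omega
  have hx0 : (0:ℝ) < x := by exact_mod_cast hx1
  rw [Real.dist_eq]
  have hkey := key x hx1
  have hNx : ((|S| + C*T)/ε) < x := by
    have : (N:ℝ) ≤ x := by exact_mod_cast le_of_lt (by omega : N < x)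
    linarith
  have hfin : (|S| + C*T)/x < ε := by
    rw [div_lt_iff₀ hx0]
    calc |S| + C*T = ((|S|+C*T)/ε) * ε := by field_simp
      _ < x * ε := mul_lt_mul_of_pos_right hNx hε
      _ = ε * x := mul_comm _ _
  linarith

lemma per_mod (G : ℕ → ℝ) (T : ℕ) (hT : 0 < T) (h : ∀ n, G (n + T) = G n) (n : ℕ) :
    G n = G (n % T) := by
  have key : ∀ k r, G (r + k * T) = G r := by
    intro k
    induction k with
    | zero => simp
    | succ k ih => intro r; rw [show r + (k+1)*T = (r + k*T) + T by ring, h, ih]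
  conv_lhs => rw [← Nat.mod_add_div' n T]
  exact key _ _

lemma crt_sum (G1 G2 : ℕ → ℝ) (T1 T2 : ℕ) (h1 : 0 < T1) (h2 : 0 < T2)
    (hco : Nat.Coprime T1 T2) (hp1 : ∀ n, G1 (n + T1) = G1 n) (hp2 : ∀ n, G2 (n + T2) = G2 n) :
    ∑ n ∈ Finset.range (T1*T2), G1 n * G2 n
      = (∑ n ∈ Finset.range T1, G1 n) * (∑ n ∈ Finset.range T2, G2 n) := by
  rw [Finset.sum_mul_sum, ← Finset.sum_product']
  refine Finset.sum_nbij' (i := fun n => (n % T1, n % T2))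
    (j := fun pr => (Nat.chineseRemainder hco pr.1 pr.2 : ℕ)) ?_ ?_ ?_ ?_ ?_
  · intro n _
    simp [Finset.mem_product, Nat.mod_lt _ h1, Nat.mod_lt _ h2]
  · intro pr _
    simp only [Finset.mem_range]
    exact Nat.chineseRemainder_lt_mul hco pr.1 pr.2 (by omega) (by omega)
  · intro n hn
    simp only [Finset.mem_range] at hn
    set k := (Nat.chineseRemainder hco (n % T1) (n % T2) : ℕ) with hk
    have hprop := (Nat.chineseRemainder hco (n % T1) (n % T2)).2
    have m1 : k ≡ n [MOD T1] := hprop.1.trans (Nat.mod_modEq n T1)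
    have m2 : k ≡ n [MOD T2] := hprop.2.trans (Nat.mod_modEq n T2)
    have m12 : k ≡ n [MOD T1 * T2] := (Nat.modEq_and_modEq_iff_modEq_mul hco).1 ⟨m1, m2⟩
    have hklt : k < T1 * T2 := Nat.chineseRemainder_lt_mul hco _ _ (by omega) (by omega)
    have : k % (T1*T2) = n % (T1*T2) := m12
    rwa [Nat.mod_eq_of_lt hklt, Nat.mod_eq_of_lt hn] at this
  · intro pr hpr
    simp only [Finset.mem_product, Finset.mem_range] at hpr
    have hprop := (Nat.chineseRemainder hco pr.1 pr.2).2
    have e1 : (Nat.chineseRemainder hco pr.1 pr.2 : ℕ) % T1 = pr.1 := by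
      exact Eq.trans (hprop.1 : _ % T1 = pr.1 % T1) (Nat.mod_eq_of_lt hpr.1)
    have e2 : (Nat.chineseRemainder hco pr.1 pr.2 : ℕ) % T2 = pr.2 := by
      exact Eq.trans (hprop.2 : _ % T2 = pr.2 % T2) (Nat.mod_eq_of_lt hpr.2)
    simp [e1, e2]
  · intro n _
    rw [← per_mod G1 T1 h1 hp1 n, ← per_mod G2 T2 h2 hp2 n]

lemma mean_of_approx (g : ℕ → ℝ) (gm : ℕ → ℕ → ℝ) (μ : ℕ → ℝ)
    (hμ : ∀ m, Tendsto (fun x : ℕ => (∑ n ∈ Finset.Ioc 0 x, gm m n) / x) atTop (nhds (μ m)))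
    (ε C : ℕ → ℝ) (hε0 : ∀ m, 0 ≤ ε m) (hanti : Antitone ε)
    (hεlim : Tendsto ε atTop (nhds 0)) (hC0 : ∀ m, 0 ≤ C m)
    (hclose : ∀ m x, ∑ n ∈ Finset.Ioc 0 x, |g n - gm m n| ≤ ε m * x + C m) :
    ∃ L, Tendsto μ atTop (nhds L) ∧
      Tendsto (fun x : ℕ => (∑ n ∈ Finset.Ioc 0 x, g n) / x) atTop (nhds L) := by
  -- basic averaged closeness
  have havg : ∀ m, ∀ x : ℕ, 1 ≤ x →
      |(∑ n ∈ Finset.Ioc 0 x, g n) / x - (∑ n ∈ Finset.Ioc 0 x, gm m n) / x|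
        ≤ ε m + C m / x := by
    intro m x hx
    have hx0 : (0:ℝ) < x := by exact_mod_cast hx
    rw [div_sub_div_same, abs_div, abs_of_pos hx0, div_le_iff₀ hx0, ← Finset.sum_sub_distrib]
    calc |∑ n ∈ Finset.Ioc 0 x, (g n - gm m n)| ≤ ∑ n ∈ Finset.Ioc 0 x, |g n - gm m n| :=
          Finset.abs_sum_le_sum_abs _ _
      _ ≤ ε m * x + C m := hclose m x
      _ ≤ (ε m + C m / x) * x := by
          rw [add_mul]
          have : C m / x * x = C m := by field_simp
          rw [this]
  have hdist : ∀ m m', dist (μ m) (μ m') ≤ ε m + ε m' := by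
    intro m m'
    have h1 : Tendsto (fun x : ℕ =>
        dist ((∑ n ∈ Finset.Ioc 0 x, gm m n) / x) ((∑ n ∈ Finset.Ioc 0 x, gm m' n) / x))
        atTop (nhds (dist (μ m) (μ m'))) := (hμ m).dist (hμ m')
    have h2 : Tendsto (fun x : ℕ => ε m + ε m' + (C m + C m') / x) atTop
        (nhds (ε m + ε m' + 0)) := by
      apply Tendsto.add tendsto_const_nhds
      exact Tendsto.div_atTop tendsto_const_nhds tendsto_natCast_atTop_atTop
    rw [add_zero] at h2
    refine le_of_tendsto_of_tendsto' h1 h2 ?_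
    intro x
    rcases Nat.eq_zero_or_pos x with hx | hx
    · subst hx
      simp
      linarith [hε0 m, hε0 m', hC0 m, hC0 m']
    · have hx0 : (0:ℝ) < x := by exact_mod_cast hx
      rw [Real.dist_eq]
      calc |(∑ n ∈ Finset.Ioc 0 x, gm m n) / x - (∑ n ∈ Finset.Ioc 0 x, gm m' n) / x|
          ≤ |(∑ n ∈ Finset.Ioc 0 x, gm m n) / x - (∑ n ∈ Finset.Ioc 0 x, g n) / x|
            + |(∑ n ∈ Finset.Ioc 0 x, g n) / x - (∑ n ∈ Finset.Ioc 0 x, gm m' n) / x| :=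
            abs_sub_le _ _ _
        _ ≤ (ε m + C m / x) + (ε m' + C m' / x) := by
            gcongr ?_ + ?_
            · rw [abs_sub_comm]; exact havg m x hx
            · exact havg m' x hx
        _ = ε m + ε m' + (C m + C m') / x := by ring
  have hcauchy : CauchySeq μ := by
    apply cauchySeq_of_le_tendsto_0 (fun N => 2 * ε N)
    · intro n m N hn hm
      calc dist (μ n) (μ m) ≤ ε n + ε m := hdist n m
        _ ≤ ε N + ε N := by gcongr <;> [exact hanti hn; exact hanti hm]
        _ = 2 * ε N := by ring
    · simpa using hεlim.const_mul 2
  obtain ⟨L, hL⟩ := cauchySeq_tendsto_of_complete hcauchy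
  have hμL : ∀ m, dist (μ m) L ≤ 2 * ε m := by
    intro m
    have h1 : Tendsto (fun m' => dist (μ m) (μ m')) atTop (nhds (dist (μ m) L)) :=
      tendsto_const_nhds.dist hL
    refine le_of_tendsto h1 ?_
    filter_upwards [eventually_ge_atTop m] with m' hm'
    calc dist (μ m) (μ m') ≤ ε m + ε m' := hdist m m'
      _ ≤ ε m + ε m := by gcongr; exact hanti hm'
      _ = 2 * ε m := by ring
  refine ⟨L, hL, ?_⟩
  rw [Metric.tendsto_atTop]
  intro δ hδ
  -- choose m with ε m < δ/6
  have : ∀ᶠ m in atTop, ε m < δ/6 := by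
    have := hεlim
    rw [Metric.tendsto_atTop] at this
    obtain ⟨M, hM⟩ := this (δ/6) (by linarith)
    filter_upwards [eventually_ge_atTop M] with m hm
    have := hM m hm
    rw [Real.dist_eq, sub_zero, abs_of_nonneg (hε0 m)] at this
    exact this
  obtain ⟨m, hm⟩ := this.exists
  -- choose X for the m-average convergence and for C m / x
  have h1 := hμ m
  rw [Metric.tendsto_atTop] at h1
  obtain ⟨X1, hX1⟩ := h1 (δ/6) (by linarith)
  obtain ⟨X2, hX2⟩ := exists_nat_gt (C m / (δ/6))
  refine ⟨max (max X1 X2) 1 + 1, fun x hx => ?_⟩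
  have hx1 : 1 ≤ x := by omega
  have hxX1 : X1 ≤ x := by omega
  have hxX2 : X2 < x := by omega
  have hx0 : (0:ℝ) < x := by exact_mod_cast hx1
  have hCx : C m / x < δ/6 := by
    have hX2x : (X2:ℝ) < x := by exact_mod_cast hxX2
    have : C m / (δ/6) < x := lt_trans hX2 hX2x
    rw [div_lt_iff₀ hx0]
    calc C m = (C m / (δ/6)) * (δ/6) := by field_simp
      _ < x * (δ/6) := by apply mul_lt_mul_of_pos_right this; linarith
      _ = δ/6 * x := mul_comm _ _
  rw [Real.dist_eq]
  calc |(∑ n ∈ Finset.Ioc 0 x, g n) / x - L|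
      ≤ |(∑ n ∈ Finset.Ioc 0 x, g n) / x - (∑ n ∈ Finset.Ioc 0 x, gm m n) / x|
        + |(∑ n ∈ Finset.Ioc 0 x, gm m n) / x - μ m| + |μ m - L| := by
        have := abs_sub_le ((∑ n ∈ Finset.Ioc 0 x, g n) / x) (μ m) L
        have h2 := abs_sub_le ((∑ n ∈ Finset.Ioc 0 x, g n) / x)
          ((∑ n ∈ Finset.Ioc 0 x, gm m n) / x) (μ m)
        linarith
    _ < (ε m + C m / x) + δ/6 + 2 * ε m := by
        have ha := havg m x hx1
        have hb := hX1 x hxX1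
        rw [Real.dist_eq] at hb
        have hc := hμL m
        rw [Real.dist_eq] at hc
        have : |(∑ n ∈ Finset.Ioc 0 x, g n) / x - (∑ n ∈ Finset.Ioc 0 x, gm m n) / x|
            ≤ ε m + C m / x := ha
        linarith
    _ < δ := by linarith

noncomputable def lamQ (q n : ℕ) : ℝ := (-1 : ℝ) ^ (n.factorization q)
noncomputable def lamQT (q m n : ℕ) : ℝ := (-1 : ℝ) ^ (min (n.factorization q) m)
noncomputable def FF (Q H : Finset ℕ) (n : ℕ) : ℝ := ∏ h ∈ H, ∏ q ∈ Q, lamQ q (n + h)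
noncomputable def FT (Q H : Finset ℕ) (m n : ℕ) : ℝ := ∏ h ∈ H, ∏ q ∈ Q, lamQT q m (n + h)

lemma OmegaP_finset (Q : Finset ℕ) (n : ℕ) :
    OmegaP (↑Q) n = ∑ q ∈ Q, n.factorization q := by
  unfold OmegaP
  rw [Finsupp.sum]
  simp only [Finset.mem_coe]
  rw [Finset.sum_ite_mem]
  apply Finset.sum_subset (Finset.inter_subset_right)
  intro q hq hnq
  rw [Finset.mem_inter] at hnq
  have : q ∉ n.factorization.support := by tauto
  exact Finsupp.notMem_support_iff.1 this

lemma LambdaPH_eq_FF (Q H : Finset ℕ) (n : ℕ) : LambdaPH (↑Q) H n = FF Q H n := by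
  unfold LambdaPH FF lambdaP lamQ
  refine Finset.prod_congr rfl fun h _ => ?_
  rw [OmegaP_finset, ← Finset.prod_pow_eq_pow_sum]

lemma FF_eq_pow (Q H : Finset ℕ) (n : ℕ) :
    FF Q H n = (-1 : ℝ) ^ (∑ h ∈ H, ∑ q ∈ Q, (n+h).factorization q) := by
  unfold FF lamQ
  rw [← Finset.prod_pow_eq_pow_sum]
  refine Finset.prod_congr rfl fun h _ => ?_
  rw [← Finset.prod_pow_eq_pow_sum]

lemma FF_pm (Q H : Finset ℕ) (n : ℕ) : FF Q H n = 1 ∨ FF Q H n = -1 := by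
  rw [FF_eq_pow]
  rcases Nat.even_or_odd (∑ h ∈ H, ∑ q ∈ Q, (n+h).factorization q) with h | h
  · left; exact h.neg_one_pow
  · right; exact h.neg_one_pow

lemma abs_FF (Q H : Finset ℕ) (n : ℕ) : |FF Q H n| ≤ 1 := by
  rcases FF_pm Q H n with h | h <;> rw [h] <;> norm_num

lemma abs_lamQT (q m n : ℕ) : |lamQT q m n| ≤ 1 := by
  unfold lamQT; rw [abs_pow, abs_neg, abs_one, one_pow]

lemma abs_FT (Q H : Finset ℕ) (m n : ℕ) : |FT Q H m n| ≤ 1 := by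
  unfold FT
  calc |∏ h ∈ H, ∏ q ∈ Q, lamQT q m (n+h)| = ∏ h ∈ H, |∏ q ∈ Q, lamQT q m (n+h)| := by
        rw [Finset.abs_prod]
    _ ≤ ∏ h ∈ H, (1:ℝ) := by
        apply Finset.prod_le_prod (fun _ _ => abs_nonneg _)
        intro h _
        rw [Finset.abs_prod]
        calc ∏ q ∈ Q, |lamQT q m (n+h)| ≤ ∏ q ∈ Q, (1:ℝ) :=
              Finset.prod_le_prod (fun _ _ => abs_nonneg _) (fun q _ => abs_lamQT q m _)
          _ = 1 := by simp
    _ = 1 := by simp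

lemma trunc_val_per {q : ℕ} (hq : q.Prime) (m T n : ℕ) (hdvd : q^m ∣ T) (hn : 1 ≤ n) :
    min ((n + T).factorization q) m = min (n.factorization q) m := by
  have hn0 : n ≠ 0 := by omega
  have hT0 : n + T ≠ 0 := by omega
  by_cases hcase : q^m ∣ n
  · have h1 : m ≤ n.factorization q := (hq.pow_dvd_iff_le_factorization hn0).1 hcase
    have h2 : m ≤ (n+T).factorization q :=
      (hq.pow_dvd_iff_le_factorization hT0).1 (dvd_add hcase hdvd)
    omega
  · have hlt : n.factorization q < m := by
      by_contra hcon; push_neg at hcon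
      exact hcase ((hq.pow_dvd_iff_le_factorization hn0).2 hcon)
    set v := n.factorization q with hv
    have hv1 : q^v ∣ n := (hq.pow_dvd_iff_le_factorization hn0).2 le_rfl
    have hv2 : ¬ q^(v+1) ∣ n := by
      intro hc
      have := (hq.pow_dvd_iff_le_factorization hn0).1 hc
      omega
    have hvT : q^v ∣ T := dvd_trans (pow_dvd_pow q (le_of_lt hlt)) hdvd
    have hvT1 : q^(v+1) ∣ T := dvd_trans (pow_dvd_pow q hlt) hdvd
    have e1 : v ≤ (n+T).factorization q :=
      (hq.pow_dvd_iff_le_factorization hT0).1 (dvd_add hv1 hvT)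
    have e2 : ¬ (v+1 ≤ (n+T).factorization q) := by
      intro hc
      have hdv : q^(v+1) ∣ n + T := (hq.pow_dvd_iff_le_factorization hT0).2 hc
      rw [add_comm n T] at hdv
      exact hv2 ((Nat.dvd_add_right hvT1).1 hdv)
    omega

lemma FT_periodic (Q H : Finset ℕ) (hQ : ∀ q ∈ Q, q.Prime) (m : ℕ) (n : ℕ) (hn : 1 ≤ n) :
    FT Q H m (n + ∏ r ∈ Q, r^m) = FT Q H m n := by
  unfold FT
  refine Finset.prod_congr rfl fun h _ => Finset.prod_congr rfl fun q hq => ?_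
  unfold lamQT
  have hdvd : q^m ∣ ∏ r ∈ Q, r^m := Finset.dvd_prod_of_mem (fun r => r^m) hq
  rw [show n + (∏ r ∈ Q, r^m) + h = (n + h) + (∏ r ∈ Q, r^m) by ring]
  rw [trunc_val_per (hQ q hq) m _ _ hdvd (by omega)]

lemma FT_eq_FF (Q H : Finset ℕ) (hQ : ∀ q ∈ Q, q.Prime) (m n : ℕ) (hn : 1 ≤ n)
    (hgood : ∀ h ∈ H, ∀ q ∈ Q, ¬ (q^m ∣ (n + h))) :
    FT Q H m n = FF Q H n := by
  unfold FT FF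
  refine Finset.prod_congr rfl fun h hh => Finset.prod_congr rfl fun q hq => ?_
  unfold lamQT lamQ
  have hne : n + h ≠ 0 := by omega
  have : (n+h).factorization q < m := by
    by_contra hcon; push_neg at hcon
    exact hgood h hh q hq (((hQ q hq).pow_dvd_iff_le_factorization hne).2 hcon)
  rw [min_eq_left (le_of_lt this)]

lemma card_mult (x h d : ℕ) (hd : 0 < d) :
    (((Finset.Ioc 0 x).filter (fun n => d ∣ (n+h))).card : ℝ) ≤ (x:ℝ) / d + 1 := by
  classical
  have hd0 : (0:ℝ) < d := by exact_mod_cast hd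
  have hcard : ((Finset.Ioc 0 x).filter (fun n => d ∣ (n+h))).card
      ≤ (Finset.Ioc (h/d) ((x+h)/d)).card := by
    apply Finset.card_le_card_of_injOn (fun n => (n+h)/d)
    · intro n hn
      rw [Finset.mem_coe, Finset.mem_filter, Finset.mem_Ioc] at hn
      obtain ⟨⟨hn1, hn2⟩, hdvd⟩ := hn
      rw [Finset.mem_coe, Finset.mem_Ioc]
      constructor
      · by_contra hcon; push_neg at hcon
        have h1 : d * ((n+h)/d) ≤ d * (h/d) := Nat.mul_le_mul_left d hcon
        rw [Nat.mul_div_cancel' hdvd] at h1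
        have h2 : d * (h/d) ≤ h := Nat.mul_div_le h d
        omega
      · exact Nat.div_le_div_right (by omega)
    · intro n1 hn1 n2 hn2 heq
      simp only [Finset.coe_filter, Set.mem_setOf_eq, Finset.mem_Ioc] at hn1 hn2
      have e1 : d * ((n1+h)/d) = n1 + h := Nat.mul_div_cancel' hn1.2
      have e2 : d * ((n2+h)/d) = n2 + h := Nat.mul_div_cancel' hn2.2
      simp only at heq
      have : n1 + h = n2 + h := by rw [← e1, ← e2, heq]
      omega
  have hle : h/d ≤ (x+h)/d := Nat.div_le_div_right (by omega)
  calc (((Finset.Ioc 0 x).filter (fun n => d ∣ (n+h))).card : ℝ)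
      ≤ ((Finset.Ioc (h/d) ((x+h)/d)).card : ℝ) := by exact_mod_cast hcard
    _ = (((x+h)/d : ℕ) : ℝ) - ((h/d : ℕ) : ℝ) := by
        rw [Nat.card_Ioc, Nat.cast_sub hle]
    _ ≤ ((x:ℝ)+h)/d - ((h:ℝ)/d - 1) := by
        gcongr ?_ - ?_
        · calc (((x+h)/d : ℕ) : ℝ) ≤ ((x+h : ℕ):ℝ)/d := Nat.cast_div_le
            _ = ((x:ℝ)+h)/d := by push_cast; ring
        · have h1 : h < d * (h/d) + d := by
            calc h = d*(h/d) + h % d := (Nat.div_add_mod h d).symm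
              _ < d*(h/d) + d := Nat.add_lt_add_left (Nat.mod_lt h hd) _
          have h1' : (h:ℝ) < d * ((h/d : ℕ):ℝ) + d := by exact_mod_cast h1
          rw [div_sub_one (by positivity), div_le_iff₀ hd0]
          linarith
    _ = (x:ℝ)/d + 1 := by field_simp; ring

lemma T_pos (Q : Finset ℕ) (hQ : ∀ q ∈ Q, q.Prime) (m : ℕ) : 0 < ∏ r ∈ Q, r^m :=
  Finset.prod_pos fun r hr => pow_pos (hQ r hr).pos m

lemma exists_mean (H Q : Finset ℕ) (hQ : ∀ q ∈ Q, q.Prime) :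
    ∃ L, Tendsto (fun m : ℕ =>
        (∑ n ∈ Finset.Ioc 0 (∏ r ∈ Q, r^m), FT Q H m n) / ((∏ r ∈ Q, r^m : ℕ) : ℝ))
        atTop (nhds L) ∧
      Tendsto (fun x : ℕ => (∑ n ∈ Finset.Ioc 0 x, FF Q H n) / x) atTop (nhds L) := by
  classical
  set K : ℝ := 2 * (H.card : ℝ) * (Q.card : ℝ) with hK
  have hK0 : 0 ≤ K := by positivity
  set ε : ℕ → ℝ := fun m => K * (1/2 : ℝ)^m with hε
  set C : ℕ → ℝ := fun _ => K with hCdef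
  have hε0 : ∀ m, 0 ≤ ε m := fun m => by positivity
  have hanti : Antitone ε := by
    intro m m' hmm
    simp only [hε]
    apply mul_le_mul_of_nonneg_left _ hK0
    apply pow_le_pow_of_le_one (by norm_num) (by norm_num) hmm
  have hεlim : Tendsto ε atTop (nhds 0) := by
    have := tendsto_pow_atTop_nhds_zero_of_lt_one (by norm_num : (0:ℝ) ≤ 1/2) (by norm_num)
    have h2 := this.const_mul K
    simp only [mul_zero] at h2
    simpa [hε, one_div] using h2
  have hμ : ∀ m, Tendsto (fun x : ℕ => (∑ n ∈ Finset.Ioc 0 x, FT Q H m n) / x) atTop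
      (nhds ((∑ n ∈ Finset.Ioc 0 (∏ r ∈ Q, r^m), FT Q H m n) / ((∏ r ∈ Q, r^m : ℕ) : ℝ))) :=
    fun m => periodic_mean (FT Q H m) 1 (abs_FT Q H m) _ (T_pos Q hQ m)
      (fun n hn => FT_periodic Q H hQ m n hn)
  have hclose : ∀ m x, ∑ n ∈ Finset.Ioc 0 x, |FF Q H n - FT Q H m n| ≤ ε m * x + C m := by
    intro m x
    set bad : Finset ℕ := (Finset.Ioc 0 x).filter
      (fun n => ∃ h ∈ H, ∃ q ∈ Q, q^m ∣ n+h) with hbad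
    have step1 : ∑ n ∈ Finset.Ioc 0 x, |FF Q H n - FT Q H m n| ≤ 2 * (bad.card : ℝ) := by
      rw [← Finset.sum_filter_add_sum_filter_not (Finset.Ioc 0 x)
        (fun n => ∃ h ∈ H, ∃ q ∈ Q, q^m ∣ n+h)]
      have hgood0 : ∑ n ∈ (Finset.Ioc 0 x).filter
          (fun n => ¬ ∃ h ∈ H, ∃ q ∈ Q, q^m ∣ n+h), |FF Q H n - FT Q H m n| = 0 := by
        apply Finset.sum_eq_zero
        intro n hn
        rw [Finset.mem_filter, Finset.mem_Ioc] at hn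
        push_neg at hn
        rw [FT_eq_FF Q H hQ m n (by omega) (by
          intro h hh q hq
          exact hn.2 h hh q hq)]
        simp
      have hbad2 : ∑ n ∈ bad, |FF Q H n - FT Q H m n| ≤ ∑ _n ∈ bad, (2:ℝ) := by
        apply Finset.sum_le_sum
        intro n _
        calc |FF Q H n - FT Q H m n| ≤ |FF Q H n| + |FT Q H m n| := abs_sub _ _
          _ ≤ 1 + 1 := add_le_add (abs_FF Q H n) (abs_FT Q H m n)
          _ = 2 := by norm_num
      rw [hgood0, add_zero]
      calc ∑ n ∈ bad, |FF Q H n - FT Q H m n| ≤ ∑ _n ∈ bad, (2:ℝ) := hbad2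
        _ = 2 * (bad.card : ℝ) := by rw [Finset.sum_const]; ring
    have step2 : (bad.card : ℝ)
        ≤ ∑ h ∈ H, ∑ q ∈ Q, (((Finset.Ioc 0 x).filter (fun n => q^m ∣ n+h)).card : ℝ) := by
      have hsub : bad ⊆ H.biUnion (fun h => Q.biUnion
          (fun q => (Finset.Ioc 0 x).filter (fun n => q^m ∣ n+h))) := by
        intro n hn
        rw [hbad, Finset.mem_filter] at hn
        obtain ⟨hn1, h, hh, q, hq, hd⟩ := hn
        rw [Finset.mem_biUnion]
        exact ⟨h, hh, by rw [Finset.mem_biUnion]; exact ⟨q, hq, by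
          rw [Finset.mem_filter]; exact ⟨hn1, hd⟩⟩⟩
      have h1 : bad.card ≤ ∑ h ∈ H, ∑ q ∈ Q,
          ((Finset.Ioc 0 x).filter (fun n => q^m ∣ n+h)).card := by
        calc bad.card ≤ (H.biUnion _).card := Finset.card_le_card hsub
          _ ≤ ∑ h ∈ H, (Q.biUnion (fun q =>
              (Finset.Ioc 0 x).filter (fun n => q^m ∣ n+h))).card := Finset.card_biUnion_le
          _ ≤ ∑ h ∈ H, ∑ q ∈ Q, ((Finset.Ioc 0 x).filter (fun n => q^m ∣ n+h)).card :=
            Finset.sum_le_sum (fun h _ => Finset.card_biUnion_le)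
      exact_mod_cast h1
    have step3 : ∑ h ∈ H, ∑ q ∈ Q, (((Finset.Ioc 0 x).filter (fun n => q^m ∣ n+h)).card : ℝ)
        ≤ (H.card : ℝ) * (Q.card : ℝ) * ((x:ℝ)/2^m + 1) := by
      calc ∑ h ∈ H, ∑ q ∈ Q, (((Finset.Ioc 0 x).filter (fun n => q^m ∣ n+h)).card : ℝ)
          ≤ ∑ h ∈ H, ∑ q ∈ Q, ((x:ℝ)/2^m + 1) := by
            apply Finset.sum_le_sum
            intro h _
            apply Finset.sum_le_sum
            intro q hq
            have hq2 : 2 ≤ q := (hQ q hq).two_le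
            have hqm : 0 < q^m := pow_pos (by omega) m
            calc (((Finset.Ioc 0 x).filter (fun n => q^m ∣ n+h)).card : ℝ)
                ≤ (x:ℝ)/(q^m : ℕ) + 1 := card_mult x h (q^m) hqm
              _ ≤ (x:ℝ)/2^m + 1 := by
                  have h2q : ((2:ℝ))^m ≤ ((q:ℝ))^m :=
                    pow_le_pow_left₀ (by norm_num) (by exact_mod_cast hq2) m
                  have hcast : ((q^m : ℕ) : ℝ) = (q:ℝ)^m := by push_cast; ring
                  rw [hcast]
                  gcongr
        _ = (H.card : ℝ) * (Q.card : ℝ) * ((x:ℝ)/2^m + 1) := by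
            rw [Finset.sum_const, Finset.sum_const]
            simp [nsmul_eq_mul]; ring
    calc ∑ n ∈ Finset.Ioc 0 x, |FF Q H n - FT Q H m n| ≤ 2 * (bad.card : ℝ) := step1
      _ ≤ 2 * ((H.card : ℝ) * (Q.card : ℝ) * ((x:ℝ)/2^m + 1)) := by
          apply mul_le_mul_of_nonneg_left (le_trans step2 step3) (by norm_num)
      _ = ε m * x + C m := by
          simp only [hε, hCdef, hK, one_div, inv_pow]
          field_simp
  exact mean_of_approx (FF Q H) (fun m => FT Q H m) _ hμ ε C hε0 hanti hεlim
    (fun _ => hK0) hclose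

lemma Icc_one_eq_Ioc (x : ℕ) : Finset.Icc 1 x = Finset.Ioc 0 x := by
  ext n; simp [Finset.mem_Icc, Finset.mem_Ioc, Nat.lt_iff_add_one_le]

lemma sum_Ioc_shift (f : ℕ → ℝ) (T : ℕ) :
    ∑ n ∈ Finset.Ioc 0 T, f n = ∑ n ∈ Finset.range T, f (n+1) := by
  have h : Finset.Ioc 0 T = Finset.Ico 1 (T+1) := by
    ext n; simp [Finset.mem_Ioc, Finset.mem_Ico, Nat.lt_succ_iff]; omega
  rw [h, Finset.sum_Ico_eq_sum_range]
  simp only [Nat.add_sub_cancel]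
  exact Finset.sum_congr rfl fun i _ => by rw [add_comm]

/-- From a Cesàro mean for `LambdaPH` obtain the density of `NPH`. -/
lemma density_from_mean (P : Set ℕ) (H : Finset ℕ) (L : ℝ)
    (hpm : ∀ n, LambdaPH P H n = 1 ∨ LambdaPH P H n = -1)
    (hmean : Tendsto (fun x : ℕ => (∑ n ∈ Finset.Ioc 0 x, LambdaPH P H n) / x) atTop (nhds L)) :
    HasDensity (NPH P H) ((1 - L)/2) := by
  have key : ∀ x : ℕ, (countIn (NPH P H) x : ℝ)
      = ((x:ℝ) - ∑ n ∈ Finset.Ioc 0 x, LambdaPH P H n)/2 := by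
    intro x
    unfold countIn
    rw [Icc_one_eq_Ioc]
    have h1 : ((((Finset.Ioc 0 x).filter (fun n => n ∈ NPH P H)).card : ℕ) : ℝ)
        = ∑ n ∈ Finset.Ioc 0 x, (if n ∈ NPH P H then (1:ℝ) else 0) := by
      rw [Finset.sum_boole]
    rw [h1]
    have h2 : ∀ n ∈ Finset.Ioc 0 x,
        (if n ∈ NPH P H then (1:ℝ) else 0) = (1 - LambdaPH P H n)/2 := by
      intro n _
      rcases hpm n with h | h
      · have hn : n ∉ NPH P H := by
          simp only [NPH, Set.mem_setOf_eq, h]; norm_num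
        rw [if_neg hn, h]; norm_num
      · have hn : n ∈ NPH P H := by simp [NPH, h]
        rw [if_pos hn, h]; norm_num
    rw [Finset.sum_congr rfl h2, ← Finset.sum_div, Finset.sum_sub_distrib,
      Finset.sum_const, Nat.card_Ioc, Nat.sub_zero, nsmul_eq_mul, mul_one]
  have heq : ∀ᶠ x : ℕ in atTop,
      (1 - (∑ n ∈ Finset.Ioc 0 x, LambdaPH P H n) / x) / 2 = (countIn (NPH P H) x : ℝ) / x := by
    filter_upwards [eventually_ge_atTop 1] with x hx
    have hx0 : (x:ℝ) ≠ 0 := by positivity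
    rw [key x]
    field_simp
    try ring
    try exact Or.inl trivial
  unfold HasDensity
  apply Tendsto.congr' heq
  have : Tendsto (fun x : ℕ => (1 - (∑ n ∈ Finset.Ioc 0 x, LambdaPH P H n) / x) / 2) atTop
      (nhds ((1 - L)/2)) := (tendsto_const_nhds.sub hmean).div_const 2
  exact this

lemma FT_insert (Q H : Finset ℕ) (p : ℕ) (hpQ : p ∉ Q) (m n : ℕ) :
    FT (insert p Q) H m n = FT Q H m n * FT {p} H m n := by
  unfold FT
  rw [← Finset.prod_mul_distrib]
  refine Finset.prod_congr rfl fun h _ => ?_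
  rw [Finset.prod_insert hpQ, Finset.prod_singleton, mul_comm]

/-- For finite `P'`, a prime `p ∉ P'` and non-empty finite `H`, the densities
`η_{P'}^H`, `η_p^H`, `η_{P'∪{p}}^H` exist and satisfy
`η_{P'∪{p}}^H = η_{P'}^H (1 − η_p^H) + η_p^H (1 − η_{P'}^H)`. -/
theorem stmt_13 (H : Finset ℕ) (hH : H.Nonempty) (P' : Set ℕ)
    (hP' : ∀ q ∈ P', Nat.Prime q) (hfin : P'.Finite)
    (p : ℕ) (hp : p.Prime) (hpP : p ∉ P') :
    ∃ a b c : ℝ,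
      HasDensity (NPH P' H) a ∧ HasDensity (NPH {p} H) b ∧
      HasDensity (NPH (P' ∪ {p}) H) c ∧
      c = a * (1 - b) + b * (1 - a) := by

  classical
  set Q' : Finset ℕ := hfin.toFinset with hQ'def
  have hcoe : (↑Q' : Set ℕ) = P' := hfin.coe_toFinset
  have hQ'p : ∀ q ∈ Q', q.Prime := fun q hq => hP' q (by rwa [hfin.mem_toFinset] at hq)
  have hpQ' : p ∉ Q' := fun hc => hpP (by rwa [hfin.mem_toFinset] at hc)
  have hQup : ∀ q ∈ insert p Q', q.Prime := by
    intro q hq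
    rcases Finset.mem_insert.1 hq with rfl | hq
    · exact hp
    · exact hQ'p q hq
  have hppr : ∀ q ∈ ({p} : Finset ℕ), q.Prime := by
    intro q hq; rw [Finset.mem_singleton] at hq; subst hq; exact hp
  obtain ⟨LA, hμA, havgA⟩ := exists_mean H Q' hQ'p
  obtain ⟨LB, hμB, havgB⟩ := exists_mean H {p} hppr
  obtain ⟨LC, hμC, havgC⟩ := exists_mean H (insert p Q') hQup
  -- the product identity for the truncated means
  have hLC : LC = LA * LB := by
    have hprod : ∀ m : ℕ,
        (∑ n ∈ Finset.Ioc 0 (∏ r ∈ insert p Q', r^m), FT (insert p Q') H m n)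
          / ((∏ r ∈ insert p Q', r^m : ℕ) : ℝ)
        = ((∑ n ∈ Finset.Ioc 0 (∏ r ∈ Q', r^m), FT Q' H m n) / ((∏ r ∈ Q', r^m : ℕ) : ℝ))
          * ((∑ n ∈ Finset.Ioc 0 (∏ r ∈ ({p} : Finset ℕ), r^m), FT {p} H m n)
              / ((∏ r ∈ ({p} : Finset ℕ), r^m : ℕ) : ℝ)) := by
      intro m
      set T1 : ℕ := ∏ r ∈ Q', r^m with hT1
      set T2 : ℕ := ∏ r ∈ ({p} : Finset ℕ), r^m with hT2
      have hT2e : T2 = p^m := by rw [hT2, Finset.prod_singleton]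
      have hT1pos : 0 < T1 := T_pos Q' hQ'p m
      have hT2pos : 0 < T2 := T_pos {p} hppr m
      have hTC : (∏ r ∈ insert p Q', r^m) = T1 * T2 := by
        rw [Finset.prod_insert hpQ', hT2e, mul_comm, hT1]
      have hco : Nat.Coprime T1 T2 := by
        rw [hT1, hT2e]
        apply Nat.Coprime.prod_left
        intro q hq
        have hqp : q ≠ p := fun hc => hpQ' (hc ▸ hq)
        exact Nat.Coprime.pow _ _ ((Nat.coprime_primes (hQ'p q hq) hp).2 hqp)
      have hcrt : ∑ n ∈ Finset.Ioc 0 (T1 * T2), FT (insert p Q') H m n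
          = (∑ n ∈ Finset.Ioc 0 T1, FT Q' H m n) * (∑ n ∈ Finset.Ioc 0 T2, FT {p} H m n) := by
        rw [sum_Ioc_shift _ (T1*T2), sum_Ioc_shift _ T1, sum_Ioc_shift _ T2]
        have hsplit : ∀ n : ℕ, FT (insert p Q') H m (n+1)
            = FT Q' H m (n+1) * FT {p} H m (n+1) := fun n => FT_insert Q' H p hpQ' m (n+1)
        rw [Finset.sum_congr rfl (fun n _ => hsplit n)]
        apply crt_sum _ _ T1 T2 hT1pos hT2pos hco
        · intro n
          rw [show n + T1 + 1 = (n+1) + T1 by ring]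
          exact FT_periodic Q' H hQ'p m (n+1) (by omega)
        · intro n
          rw [show n + T2 + 1 = (n+1) + T2 by ring]
          exact FT_periodic {p} H hppr m (n+1) (by omega)
      rw [hTC, hcrt]
      have h1 : ((T1 * T2 : ℕ) : ℝ) = (T1:ℝ) * (T2:ℝ) := by push_cast; ring
      rw [h1]
      rw [div_mul_div_comm]
    have hμC' : Tendsto (fun m : ℕ =>
        ((∑ n ∈ Finset.Ioc 0 (∏ r ∈ Q', r^m), FT Q' H m n) / ((∏ r ∈ Q', r^m : ℕ) : ℝ))
          * ((∑ n ∈ Finset.Ioc 0 (∏ r ∈ ({p} : Finset ℕ), r^m), FT {p} H m n)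
              / ((∏ r ∈ ({p} : Finset ℕ), r^m : ℕ) : ℝ))) atTop (nhds LC) := by
      apply Tendsto.congr (fun m => hprod m) hμC
    exact tendsto_nhds_unique hμC' (hμA.mul hμB)
  -- densities
  have hdA : HasDensity (NPH P' H) ((1 - LA)/2) := by
    apply density_from_mean P' H LA
    · intro n; rw [← hcoe, LambdaPH_eq_FF]; exact FF_pm Q' H n
    · have he : (fun x : ℕ => (∑ n ∈ Finset.Ioc 0 x, LambdaPH P' H n) / x)
          = (fun x : ℕ => (∑ n ∈ Finset.Ioc 0 x, FF Q' H n) / x) := by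
        funext x
        congr 1
        exact Finset.sum_congr rfl fun n _ => by rw [← hcoe, LambdaPH_eq_FF]
      rw [he]; exact havgA
  have hdB : HasDensity (NPH {p} H) ((1 - LB)/2) := by
    apply density_from_mean {p} H LB
    · intro n
      rw [show ({p} : Set ℕ) = (↑({p} : Finset ℕ) : Set ℕ) by simp, LambdaPH_eq_FF]
      exact FF_pm {p} H n
    · have he : (fun x : ℕ => (∑ n ∈ Finset.Ioc 0 x, LambdaPH {p} H n) / x)
          = (fun x : ℕ => (∑ n ∈ Finset.Ioc 0 x, FF {p} H n) / x) := by
        funext x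
        congr 1
        refine Finset.sum_congr rfl fun n _ => ?_
        rw [show ({p} : Set ℕ) = (↑({p} : Finset ℕ) : Set ℕ) by simp, LambdaPH_eq_FF]
      rw [he]; exact havgB
  have hcoeU : (↑(insert p Q') : Set ℕ) = P' ∪ {p} := by
    rw [Finset.coe_insert, hcoe, Set.union_singleton]
  have hdC : HasDensity (NPH (P' ∪ {p}) H) ((1 - LC)/2) := by
    apply density_from_mean (P' ∪ {p}) H LC
    · intro n; rw [← hcoeU, LambdaPH_eq_FF]; exact FF_pm (insert p Q') H n
    · have he : (fun x : ℕ => (∑ n ∈ Finset.Ioc 0 x, LambdaPH (P' ∪ {p}) H n) / x)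
          = (fun x : ℕ => (∑ n ∈ Finset.Ioc 0 x, FF (insert p Q') H n) / x) := by
        funext x
        congr 1
        exact Finset.sum_congr rfl fun n _ => by rw [← hcoeU, LambdaPH_eq_FF]
      rw [he]; exact havgC
  refine ⟨(1 - LA)/2, (1 - LB)/2, (1 - LC)/2, hdA, hdB, hdC, ?_⟩
  rw [hLC]; ring
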